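/- Let S : ℕ with S ≥ 1, let w : Fin S → ℝ satisfy w s > 0 for all s and Σ_s w s = 1, let g : Fin S → ℝ with |g s| ≤ M for all s, and let C > 0 and η > 0. Define the simplex Δ := {q : Fin S → ℝ | ∀ s, 0 ≤ q s, and Σ_s q s = 1}, KL(q‖p) := Σ_s q s · log (q s / p s), and the KL ball B := {q ∈ Δ | KL(q‖w) ≤ C}. Suppose q : ℕ → (Fin S → ℝ) satisfies q 0 = w, q t ∈ B for all t, and for every t, q (t+1) minimizes q' ↦ η·(Σ_s g s · q' s) + KL(q'‖q t) over q' ∈ B. Then for every comparator p ∈ B and every T : ℕ with T ≥ 1, (1/T)·Σ_{t=0}^{T−1} (Σ_s g s · q t s − Σ_s g s · p s) ≤ C/(η·T) + η·M²/2. In particular, with η = √(2C/(M²·T)) the averaged iterate's linear objective is within √2·M·√(C/T) of the optimum over the ball. -/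

import Mathlib

open Real Finset

/-- Discrete Kullback--Leibler divergence `KL(q‖p) = Σ_s q_s log(q_s / p_s)`
(with the convention `Real.log 0 = 0`, so terms with `q s = 0` vanish). -/
noncomputable def dKL {S : ℕ} (q p : Fin S → ℝ) : ℝ :=
  ∑ s, q s * Real.log (q s / p s)

/-- Membership in the KL ball of radius `C` around `w` within the probability simplex. -/
def inKLBall {S : ℕ} (w : Fin S → ℝ) (C : ℝ) (q : Fin S → ℝ) : Prop :=
  (∀ s, 0 ≤ q s) ∧ (∑ s, q s = 1) ∧ dKL q w ≤ C


section MDAux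
open Set

lemma hasDerivAt_F (y : ℝ) (hy : 0 < y) (x : ℝ) (hx : 0 < x) :
    HasDerivAt (fun x => x * (Real.log x - Real.log y) - x + y - 3/2 * (x-y)^2/(x+2*y))
      (Real.log x - Real.log y - 3/2 * ((x-y)*(x+5*y))/(x+2*y)^2) x := by
  have hne : x + 2*y ≠ 0 := by positivity
  have h1 : HasDerivAt (fun x : ℝ => x * (Real.log x - Real.log y) - x + y)
      ((Real.log x - Real.log y) + 1 - 1) x := by
    have := ((Real.hasDerivAt_log hx.ne').sub_const (Real.log y)).const_mul x
    have hmul : HasDerivAt (fun x : ℝ => x * (Real.log x - Real.log y))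
        (1 * (Real.log x - Real.log y) + x * x⁻¹) x :=
      (hasDerivAt_id x).mul ((Real.hasDerivAt_log hx.ne').sub_const (Real.log y))
    have hmul' : HasDerivAt (fun x : ℝ => x * (Real.log x - Real.log y))
        ((Real.log x - Real.log y) + 1) x := by
      convert hmul using 1; field_simp
    exact (hmul'.sub (hasDerivAt_id x)).add_const y
  have h2 : HasDerivAt (fun x : ℝ => 3/2 * (x-y)^2/(x+2*y))
      (((x-y)*(x+5*y))/(x+2*y)^2 * (3/2)) x := by
    have hn : HasDerivAt (fun x : ℝ => 3/2 * (x-y)^2) (3/2 * (2*(x-y))) x := by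
      have := ((hasDerivAt_id x).sub_const y).pow 2
      simpa using this.const_mul (3/2 : ℝ)
    have hd : HasDerivAt (fun x : ℝ => x + 2*y) 1 x := (hasDerivAt_id x).add_const (2*y)
    have := hn.fun_div hd hne
    refine this.congr_deriv ?_
    field_simp
    ring
  refine (h1.fun_sub h2).congr_deriv ?_
  ring

example : True := trivial

lemma hasDerivAt_G (y : ℝ) (hy : 0 < y) (x : ℝ) (hx : 0 < x) :
    HasDerivAt (fun x => Real.log x - Real.log y - 3/2 * ((x-y)*(x+5*y))/(x+2*y)^2)
      (1/x - 27*y^2/(x+2*y)^3) x := by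
  have hne : x + 2*y ≠ 0 := by positivity
  have hne2 : (x + 2*y)^2 ≠ 0 := pow_ne_zero _ hne
  have h1 : HasDerivAt (fun x : ℝ => Real.log x - Real.log y) x⁻¹ x :=
    (Real.hasDerivAt_log hx.ne').sub_const (Real.log y)
  have hn : HasDerivAt (fun x : ℝ => 3/2 * ((x-y)*(x+5*y)))
      (3/2 * (1*(x+5*y) + (x-y)*1)) x := by
    exact (((hasDerivAt_id x).sub_const y).mul ((hasDerivAt_id x).add_const (5*y))).const_mul (3/2)
  have hd : HasDerivAt (fun x : ℝ => (x+2*y)^2) (2*(x+2*y)) x := by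
    have := ((hasDerivAt_id x).add_const (2*y)).fun_pow 2
    simpa using this
  have := hn.fun_div hd hne2
  have h2 := h1.fun_sub this
  refine h2.congr_deriv ?_
  field_simp
  ring

lemma G_nonneg_of_ge (y : ℝ) (hy : 0 < y) (x : ℝ) (hxy : y ≤ x) :
    0 ≤ Real.log x - Real.log y - 3/2 * ((x-y)*(x+5*y))/(x+2*y)^2 := by
  set G := fun x => Real.log x - Real.log y - 3/2 * ((x-y)*(x+5*y))/(x+2*y)^2 with hG
  have hmono : MonotoneOn G (Icc y x) := by
    apply monotoneOn_of_deriv_nonneg (convex_Icc y x)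
    · intro z hz
      exact (hasDerivAt_G y hy z (lt_of_lt_of_le hy hz.1)).continuousAt.continuousWithinAt
    · intro z hz
      rw [interior_Icc] at hz
      exact (hasDerivAt_G y hy z (lt_trans hy hz.1)).differentiableAt.differentiableWithinAt
    · intro z hz
      rw [interior_Icc] at hz
      have hz0 : 0 < z := lt_trans hy hz.1
      rw [(hasDerivAt_G y hy z hz0).deriv]
      rw [sub_nonneg, div_le_div_iff₀ (by positivity) (by positivity)]
      nlinarith [sq_nonneg (z - y), hz0.le, hy.le, mul_pos hz0 hy]
  have h0 : G y = 0 := by simp [hG]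
  have := hmono (left_mem_Icc.2 hxy) (right_mem_Icc.2 hxy) hxy
  rw [h0] at this
  exact this

lemma G_nonpos_of_le (y : ℝ) (hy : 0 < y) (x : ℝ) (hx : 0 < x) (hxy : x ≤ y) :
    Real.log x - Real.log y - 3/2 * ((x-y)*(x+5*y))/(x+2*y)^2 ≤ 0 := by
  set G := fun x => Real.log x - Real.log y - 3/2 * ((x-y)*(x+5*y))/(x+2*y)^2 with hG
  have hmono : MonotoneOn G (Icc x y) := by
    apply monotoneOn_of_deriv_nonneg (convex_Icc x y)
    · intro z hz
      exact (hasDerivAt_G y hy z (lt_of_lt_of_le hx hz.1)).continuousAt.continuousWithinAt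
    · intro z hz
      rw [interior_Icc] at hz
      exact (hasDerivAt_G y hy z (lt_trans hx hz.1)).differentiableAt.differentiableWithinAt
    · intro z hz
      rw [interior_Icc] at hz
      have hz0 : 0 < z := lt_trans hx hz.1
      rw [(hasDerivAt_G y hy z hz0).deriv]
      rw [sub_nonneg, div_le_div_iff₀ (by positivity) (by positivity)]
      nlinarith [sq_nonneg (z - y), hz0.le, hy.le, mul_pos hz0 hy]
  have h0 : G y = 0 := by simp [hG]
  have := hmono (left_mem_Icc.2 hxy) (right_mem_Icc.2 hxy) hxy
  rw [h0] at this
  exact this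

lemma F_nonneg (y : ℝ) (hy : 0 < y) (x : ℝ) (hx : 0 < x) :
    0 ≤ x * (Real.log x - Real.log y) - x + y - 3/2 * (x-y)^2/(x+2*y) := by
  set F := fun x => x * (Real.log x - Real.log y) - x + y - 3/2 * (x-y)^2/(x+2*y) with hF
  have hFy : F y = 0 := by simp [hF]
  rcases le_or_gt y x with h | h
  · have hmono : MonotoneOn F (Icc y x) := by
      apply monotoneOn_of_deriv_nonneg (convex_Icc y x)
      · intro z hz
        exact (hasDerivAt_F y hy z (lt_of_lt_of_le hy hz.1)).continuousAt.continuousWithinAt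
      · intro z hz
        rw [interior_Icc] at hz
        exact (hasDerivAt_F y hy z (lt_trans hy hz.1)).differentiableAt.differentiableWithinAt
      · intro z hz
        rw [interior_Icc] at hz
        rw [(hasDerivAt_F y hy z (lt_trans hy hz.1)).deriv]
        exact G_nonneg_of_ge y hy z hz.1.le
    have := hmono (left_mem_Icc.2 h) (right_mem_Icc.2 h) h
    rw [hFy] at this; exact this
  · have hanti : AntitoneOn F (Icc x y) := by
      apply antitoneOn_of_deriv_nonpos (convex_Icc x y)
      · intro z hz
        exact (hasDerivAt_F y hy z (lt_of_lt_of_le hx hz.1)).continuousAt.continuousWithinAt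
      · intro z hz
        rw [interior_Icc] at hz
        exact (hasDerivAt_F y hy z (lt_trans hx hz.1)).differentiableAt.differentiableWithinAt
      · intro z hz
        rw [interior_Icc] at hz
        rw [(hasDerivAt_F y hy z (lt_trans hx hz.1)).deriv]
        exact G_nonpos_of_le y hy z (lt_trans hx hz.1) hz.2.le
    have := hanti (left_mem_Icc.2 h.le) (right_mem_Icc.2 h.le) h.le
    rw [hFy] at this; exact this

/-- pointwise refined Pinsker bound -/
lemma pointwise_pinsker (y : ℝ) (hy : 0 < y) (x : ℝ) (hx : 0 ≤ x) :
    3/2 * (x - y)^2 / (x + 2*y) ≤ x * Real.log (x / y) - x + y := by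
  rcases eq_or_lt_of_le hx with h | h
  · rw [← h]
    have h2y : (0:ℝ) < 0 + 2*y := by linarith
    rw [div_le_iff₀ h2y]
    nlinarith
  · have := F_nonneg y hy x h
    have hlog : Real.log (x / y) = Real.log x - Real.log y := Real.log_div h.ne' hy.ne'
    rw [hlog]; linarith

end MDAux

lemma mul_log_div (x w : ℝ) (hw : w ≠ 0) :
    x * Real.log (x / w) = x * Real.log x - x * Real.log w := by
  rcases eq_or_ne x 0 with h | h
  · simp [h]
  · rw [Real.log_div h hw]; ring

lemma mul_log_div_convex {w : ℝ} (hw : 0 < w) {x1 x2 a b : ℝ} (hx1 : 0 ≤ x1) (hx2 : 0 ≤ x2)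
    (ha : 0 ≤ a) (hb : 0 ≤ b) (hab : a + b = 1) :
    (a*x1 + b*x2) * Real.log ((a*x1 + b*x2)/w)
      ≤ a * (x1 * Real.log (x1/w)) + b * (x2 * Real.log (x2/w)) := by
  have h := Real.convexOn_mul_log.2 (Set.mem_Ici.2 hx1) (Set.mem_Ici.2 hx2) ha hb hab
  simp only [smul_eq_mul] at h
  rw [mul_log_div _ _ hw.ne', mul_log_div _ _ hw.ne', mul_log_div _ _ hw.ne']
  nlinarith [h]

lemma inKLBall_segment {S : ℕ} {w : Fin S → ℝ} {C : ℝ} (hw : ∀ s, 0 < w s)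
    {x p : Fin S → ℝ} (hx : inKLBall w C x) (hp : inKLBall w C p)
    {t : ℝ} (ht0 : 0 ≤ t) (ht1 : t ≤ 1) :
    inKLBall w C (fun s => x s + t * (p s - x s)) := by
  obtain ⟨hx0, hx1, hx2⟩ := hx
  obtain ⟨hp0, hp1, hp2⟩ := hp
  have hco : ∀ s, x s + t * (p s - x s) = (1-t) * x s + t * p s := fun s => by ring
  refine ⟨fun s => ?_, ?_, ?_⟩
  · simp only
    rw [hco s]
    have := hx0 s; have := hp0 s; nlinarith
  · simp only [hco]
    rw [Finset.sum_add_distrib, ← Finset.mul_sum, ← Finset.mul_sum, hx1, hp1]; ring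
  · have hb : dKL (fun s => x s + t * (p s - x s)) w
        ≤ (1-t) * dKL x w + t * dKL p w := by
      rw [dKL, dKL, dKL, Finset.mul_sum, Finset.mul_sum, ← Finset.sum_add_distrib]
      refine Finset.sum_le_sum (fun s _ => ?_)
      rw [hco s]
      exact mul_log_div_convex (hw s) (hx0 s) (hp0 s) (by linarith) ht0 (by ring)
    calc dKL (fun s => x s + t * (p s - x s)) w ≤ (1-t) * dKL x w + t * dKL p w := hb
      _ ≤ (1-t) * C + t * C := by
          have h1 : (0:ℝ) ≤ 1 - t := by linarith
          exact add_le_add (mul_le_mul_of_nonneg_left hx2 h1) (mul_le_mul_of_nonneg_left hp2 ht0)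
      _ = C := by ring

lemma dKL_nonneg {S : ℕ} {p x : Fin S → ℝ} (hp : ∀ s, 0 ≤ p s) (hx : ∀ s, 0 < x s)
    (hps : ∑ s, p s = 1) (hxs : ∑ s, x s = 1) : 0 ≤ dKL p x := by
  have key : ∀ s : Fin S, p s - x s ≤ p s * Real.log (p s / x s) := by
    intro s
    rcases eq_or_lt_of_le (hp s) with h | h
    · rw [← h]; simp; exact (hx s).le
    · have hpos : 0 < x s / p s := div_pos (hx s) h
      have := Real.log_le_sub_one_of_pos hpos
      have hlog : Real.log (x s / p s) = - Real.log (p s / x s) := by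
        rw [← Real.log_inv]; congr 1; field_simp
      rw [hlog] at this
      have := mul_le_mul_of_nonneg_left this h.le
      rw [mul_sub, mul_div_cancel₀ _ h.ne'] at this
      nlinarith
  have h2 : ∑ s : Fin S, (p s - x s) ≤ ∑ s, p s * Real.log (p s / x s) :=
    Finset.sum_le_sum (fun s _ => key s)
  rw [Finset.sum_sub_distrib, hps, hxs] at h2
  rw [dKL]; linarith

lemma three_point {S : ℕ} {p x y : Fin S → ℝ} (hp : ∀ s, 0 ≤ p s) (hx : ∀ s, 0 < x s)
    (hy : ∀ s, 0 < y s) :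
    dKL p y - dKL p x - dKL x y = ∑ s, (p s - x s) * Real.log (x s / y s) := by
  rw [dKL, dKL, dKL, ← Finset.sum_sub_distrib, ← Finset.sum_sub_distrib]
  refine Finset.sum_congr rfl (fun s _ => ?_)
  rcases eq_or_lt_of_le (hp s) with h | h
  · rw [← h]; simp
  · rw [Real.log_div h.ne' (hy s).ne', Real.log_div h.ne' (hx s).ne',
      Real.log_div (hx s).ne' (hy s).ne']
    ring

lemma min_pos {S : ℕ} {w : Fin S → ℝ} {C : ℝ} (hw : ∀ s, 0 < w s) (g : Fin S → ℝ) (η : ℝ)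
    {y x : Fin S → ℝ} (hy : ∀ s, 0 < y s) (hyB : inKLBall w C y) (hxB : inKLBall w C x)
    (hminx : ∀ q', inKLBall w C q' →
      η * (∑ s, g s * x s) + dKL x y ≤ η * (∑ s, g s * q' s) + dKL q' y) :
    ∀ s, 0 < x s := by
  by_contra hcon
  push_neg at hcon
  obtain ⟨s0, hs0⟩ := hcon
  have hx0 : x s0 = 0 := le_antisymm hs0 (hxB.1 s0)
  set K : ℝ := η * (∑ s, g s * (y s - x s))
      - ∑ s ∈ Finset.univ.erase s0, x s * Real.log (x s / y s) with hK
  set t : ℝ := Real.exp (-(|K|+1) / y s0) with ht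
  have ht0 : 0 < t := Real.exp_pos _
  have ht1 : t < 1 := by
    rw [ht, Real.exp_lt_one_iff]
    apply div_neg_of_neg_of_pos _ (hy s0)
    have : 0 ≤ |K| := abs_nonneg K
    linarith
  set q' : Fin S → ℝ := fun s => x s + t * (y s - x s) with hq'
  have hq'B : inKLBall w C q' := inKLBall_segment hw hxB hyB ht0.le ht1.le
  have hm := hminx q' hq'B
  -- linear part
  have hlin : ∑ s, g s * q' s = (∑ s, g s * x s) + t * (∑ s, g s * (y s - x s)) := by
    rw [Finset.mul_sum, ← Finset.sum_add_distrib]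
    refine Finset.sum_congr rfl (fun s _ => ?_)
    simp only [hq']; ring
  -- KL part
  have hKL : dKL q' y - dKL x y ≤ t * y s0 * Real.log t
      - t * ∑ s ∈ Finset.univ.erase s0, x s * Real.log (x s / y s) := by
    have hsplit : ∀ f : Fin S → ℝ, ∑ s, f s = f s0 + ∑ s ∈ Finset.univ.erase s0, f s :=
      fun f => (Finset.add_sum_erase Finset.univ f (Finset.mem_univ s0)).symm
    rw [dKL, dKL, hsplit (fun s => q' s * Real.log (q' s / y s)),
      hsplit (fun s => x s * Real.log (x s / y s))]
    have hterm0 : q' s0 * Real.log (q' s0 / y s0) = t * y s0 * Real.log t := by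
      have hq0 : q' s0 = t * y s0 := by simp [hq', hx0]
      rw [hq0, mul_div_assoc, div_self (hy s0).ne', mul_one]
    have hrest : ∑ s ∈ Finset.univ.erase s0, q' s * Real.log (q' s / y s)
        ≤ ∑ s ∈ Finset.univ.erase s0, (1 - t) * (x s * Real.log (x s / y s)) := by
      refine Finset.sum_le_sum (fun s _ => ?_)
      have hqs : q' s = (1 - t) * x s + t * y s := by simp only [hq']; ring
      have := mul_log_div_convex (hy s) (hxB.1 s) (hy s).le
        (by linarith : (0:ℝ) ≤ 1 - t) ht0.le (by ring : (1 - t) + t = 1)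
      rw [← hqs] at this
      have hyy : y s * Real.log (y s / y s) = 0 := by
        rw [div_self (hy s).ne', Real.log_one, mul_zero]
      rw [hyy, mul_zero, add_zero] at this
      exact this
    have hx0term : x s0 * Real.log (x s0 / y s0) = 0 := by rw [hx0]; simp
    rw [hterm0, hx0term]
    have := hrest
    rw [Finset.mul_sum]
    have heq : ∑ s ∈ Finset.univ.erase s0, (1 - t) * (x s * Real.log (x s / y s))
        = ∑ s ∈ Finset.univ.erase s0, x s * Real.log (x s / y s)
          - ∑ s ∈ Finset.univ.erase s0, t * (x s * Real.log (x s / y s)) := by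
      rw [← Finset.sum_sub_distrib]
      exact Finset.sum_congr rfl (fun s _ => by ring)
    rw [heq] at this
    linarith
  have hfinal : 0 ≤ t * (K + y s0 * Real.log t) := by
    rw [hlin] at hm
    rw [hK]
    have : dKL x y ≤ η * ((∑ s, g s * x s) + t * (∑ s, g s * (y s - x s))) -
        η * (∑ s, g s * x s) + dKL q' y := by linarith
    nlinarith [hKL, hm]
  have hlogt : Real.log t = -(|K|+1) / y s0 := by rw [ht, Real.log_exp]
  rw [hlogt] at hfinal
  have : y s0 * (-(|K|+1) / y s0) = -(|K|+1) := by
    rw [mul_comm]; exact div_mul_cancel₀ _ (hy s0).ne'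
  rw [this] at hfinal
  have habs : K ≤ |K| := le_abs_self K
  nlinarith [ht0]

lemma first_order {S : ℕ} {w : Fin S → ℝ} {C : ℝ} (hw : ∀ s, 0 < w s) (g : Fin S → ℝ)
    (η : ℝ) {y x p : Fin S → ℝ} (hy : ∀ s, 0 < y s) (hxpos : ∀ s, 0 < x s)
    (hxB : inKLBall w C x) (hpB : inKLBall w C p)
    (hminx : ∀ q', inKLBall w C q' →
      η * (∑ s, g s * x s) + dKL x y ≤ η * (∑ s, g s * q' s) + dKL q' y) :
    η * (∑ s, g s * x s)
      ≤ η * (∑ s, g s * p s) + ∑ s, (p s - x s) * Real.log (x s / y s) := by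
  set ψ : ℝ → ℝ := fun t => η * (∑ s, g s * (x s + t * (p s - x s)))
      + ∑ s, (x s + t * (p s - x s)) * Real.log ((x s + t * (p s - x s)) / y s) with hψ
  set D : ℝ := η * (∑ s, g s * (p s - x s))
      + ∑ s, ((p s - x s) * Real.log (x s / y s) + (p s - x s)) with hD
  have hder : HasDerivAt ψ D 0 := by
    have h1 : HasDerivAt (fun t : ℝ => η * (∑ s, g s * (x s + t * (p s - x s))))
        (η * ∑ s, g s * (p s - x s)) 0 := by
      have : HasDerivAt (fun t : ℝ => ∑ s, g s * (x s + t * (p s - x s)))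
          (∑ s, g s * (p s - x s)) 0 := by
        have := HasDerivAt.fun_sum (x := (0:ℝ)) (u := (Finset.univ : Finset (Fin S)))
          (A := fun s t => g s * (x s + t * (p s - x s)))
          (A' := fun s => g s * (p s - x s)) (fun s _ => by
            have h := (((hasDerivAt_id (0:ℝ)).mul_const (p s - x s)).const_add (x s)).const_mul
              (g s)
            simpa using h)
        exact this
      exact this.const_mul η
    have h2 : HasDerivAt
        (fun t : ℝ => ∑ s, (x s + t * (p s - x s)) * Real.log ((x s + t * (p s - x s)) / y s))
        (∑ s, ((p s - x s) * Real.log (x s / y s) + (p s - x s))) 0 := by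
      apply HasDerivAt.fun_sum
      intro s _
      have hu : HasDerivAt (fun t : ℝ => x s + t * (p s - x s)) (1 * (p s - x s)) 0 :=
        ((hasDerivAt_id (0:ℝ)).mul_const (p s - x s)).const_add (x s)
      have hne : (x s + 0 * (p s - x s)) / y s ≠ 0 := by
        simp only [zero_mul, add_zero]
        exact (div_pos (hxpos s) (hy s)).ne'
      have hlog := (hu.div_const (y s)).log hne
      have hmul := hu.fun_mul hlog
      refine hmul.congr_deriv ?_
      simp only [zero_mul, add_zero, one_mul]
      congr 1
      rw [eq_comm]
      field_simp [(hxpos s).ne', (hy s).ne']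
    exact h1.add h2
  have htend := hder.tendsto_slope_zero_right
  have hev : ∀ᶠ t in nhdsWithin (0:ℝ) (Set.Ioi 0), 0 ≤ t⁻¹ • (ψ (0 + t) - ψ 0) := by
    filter_upwards [Ioc_mem_nhdsGT_of_mem (Set.left_mem_Ico.2 zero_lt_one)] with t ht
    have hq'B : inKLBall w C (fun s => x s + t * (p s - x s)) :=
      inKLBall_segment hw hxB hpB ht.1.le ht.2
    have hm := hminx _ hq'B
    have hψ0 : ψ 0 = η * (∑ s, g s * x s) + dKL x y := by
      simp only [hψ, zero_mul, add_zero, dKL]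
    have hψt : ψ (0 + t) = η * (∑ s, g s * (x s + t * (p s - x s)))
        + dKL (fun s => x s + t * (p s - x s)) y := by
      simp only [hψ, zero_add, dKL]
    have : ψ 0 ≤ ψ (0 + t) := by rw [hψ0, hψt]; exact hm
    have htpos : 0 < t := ht.1
    exact smul_nonneg (inv_nonneg.2 htpos.le) (by linarith)
  have hD0 : 0 ≤ D := ge_of_tendsto htend hev
  have hsd : ∑ s, (p s - x s) = 0 := by
    rw [Finset.sum_sub_distrib, hpB.2.1, hxB.2.1]; ring
  have hsum : ∑ s, ((p s - x s) * Real.log (x s / y s) + (p s - x s))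
      = ∑ s, (p s - x s) * Real.log (x s / y s) := by
    rw [Finset.sum_add_distrib, hsd, add_zero]
  have hlin : ∑ s, g s * (p s - x s) = (∑ s, g s * p s) - ∑ s, g s * x s := by
    rw [← Finset.sum_sub_distrib]
    exact Finset.sum_congr rfl (fun s _ => by ring)
  rw [hD, hsum, hlin] at hD0
  nlinarith [hD0]

lemma step_bound {S : ℕ} (g : Fin S → ℝ) (M : ℝ) (hg : ∀ s, |g s| ≤ M) (hM : 0 ≤ M)
    (η : ℝ) (hη : 0 ≤ η) (x y : Fin S → ℝ) (hx : ∀ s, 0 ≤ x s) (hy : ∀ s, 0 < y s)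
    (hxs : ∑ s, x s = 1) (hys : ∑ s, y s = 1) :
    η * (∑ s, g s * y s) - η * (∑ s, g s * x s) - dKL x y ≤ η^2 * M^2 / 2 := by
  have key : ∀ s : Fin S, η * (g s * y s) - η * (g s * x s) -
      (x s * Real.log (x s / y s) - x s + y s) ≤ η^2 * M^2 / 6 * (x s + 2 * y s) := by
    intro s
    have hm : 0 < x s + 2 * y s := by have := hx s; have := hy s; linarith
    have h1 := pointwise_pinsker (y s) (hy s) (x s) (hx s)
    have h2 : η * (g s * y s) - η * (g s * x s) ≤ η * M * |y s - x s| := by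
      have : η * (g s * y s) - η * (g s * x s) = η * (g s * (y s - x s)) := by ring
      rw [this]
      have : g s * (y s - x s) ≤ M * |y s - x s| := by
        calc g s * (y s - x s) ≤ |g s * (y s - x s)| := le_abs_self _
        _ = |g s| * |y s - x s| := abs_mul _ _
        _ ≤ M * |y s - x s| := by exact mul_le_mul_of_nonneg_right (hg s) (abs_nonneg _)
      rw [mul_assoc]
      exact mul_le_mul_of_nonneg_left this hη
    have h3 : η * M * |y s - x s| ≤ 3/2 * (x s - y s)^2 / (x s + 2 * y s)
        + η^2 * M^2 / 6 * (x s + 2 * y s) := by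
      rw [div_add' _ _ _ hm.ne', le_div_iff₀ hm]
      have habs : |y s - x s|^2 = (x s - y s)^2 := by
        rw [sq_abs]; ring
      nlinarith [sq_nonneg (3 * |y s - x s| - η * M * (x s + 2 * y s)), abs_nonneg (y s - x s),
        mul_nonneg (mul_nonneg hη hM) (abs_nonneg (y s - x s))]
    linarith
  rw [dKL]
  have e1 : ∑ s, (x s + 2 * y s) = 3 := by
    rw [Finset.sum_add_distrib, hxs, ← Finset.mul_sum, hys]; norm_num
  have e2 : ∑ s, (x s * Real.log (x s / y s) - x s + y s)
      = (∑ s, x s * Real.log (x s / y s)) - 1 + 1 := by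
    rw [Finset.sum_add_distrib, Finset.sum_sub_distrib, hxs, hys]
  -- combine
  have : η * (∑ s, g s * y s) - η * (∑ s, g s * x s)
      - ∑ s, (x s * Real.log (x s / y s) - x s + y s) ≤ η^2 * M^2 / 6 * 3 := by
    calc η * (∑ s, g s * y s) - η * (∑ s, g s * x s)
        - ∑ s, (x s * Real.log (x s / y s) - x s + y s)
        = ∑ s, (η * (g s * y s) - η * (g s * x s) - (x s * Real.log (x s / y s) - x s + y s)) := by
          rw [Finset.sum_sub_distrib, Finset.sum_sub_distrib, ← Finset.mul_sum, ← Finset.mul_sum]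
      _ ≤ ∑ s, η^2 * M^2 / 6 * (x s + 2 * y s) := Finset.sum_le_sum (fun s _ => key s)
      _ = η^2 * M^2 / 6 * 3 := by rw [← Finset.mul_sum, e1]
  rw [e2] at this
  linarith


/-- Mirror-descent regret bound for the KL-ball adversary: if the iterates `q t` start at
`w`, stay in the KL ball `B` of radius `C`, and each `q (t+1)` minimizes
`q' ↦ η ⟨g, q'⟩ + KL(q'‖q t)` over `B`, then for every comparator `p ∈ B` and `T ≥ 1`,
`(1/T) Σ_{t<T} (⟨g, q t⟩ − ⟨g, p⟩) ≤ C/(ηT) + η M²/2`. -/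
theorem mirror_descent_kl_ball_regret (S : ℕ) (hS : 1 ≤ S) (w : Fin S → ℝ)
    (hw : ∀ s, 0 < w s) (hwsum : ∑ s, w s = 1) (g : Fin S → ℝ) (M : ℝ)
    (hg : ∀ s, |g s| ≤ M) (C : ℝ) (hC : 0 < C) (η : ℝ) (hη : 0 < η)
    (q : ℕ → Fin S → ℝ) (hq0 : q 0 = w) (hqB : ∀ t, inKLBall w C (q t))
    (hmin : ∀ t, ∀ q' : Fin S → ℝ, inKLBall w C q' →
      η * (∑ s, g s * q (t + 1) s) + dKL (q (t + 1)) (q t) ≤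
        η * (∑ s, g s * q' s) + dKL q' (q t)) :
    ∀ p : Fin S → ℝ, inKLBall w C p → ∀ T : ℕ, 1 ≤ T →
      (1 / (T : ℝ)) * ∑ t ∈ Finset.range T, ((∑ s, g s * q t s) - ∑ s, g s * p s) ≤
        C / (η * T) + η * M ^ 2 / 2 := by
  intro p hpB T hT
  have hM : 0 ≤ M := le_trans (abs_nonneg _) (hg ⟨0, hS⟩)
  -- positivity of iterates
  have hpos : ∀ t, ∀ s, 0 < q t s := by
    intro t
    induction t with
    | zero => rw [hq0]; exact hw
    | succ n ih => exact min_pos hw g η ih (hqB n) (hqB (n+1)) (hmin n)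
  -- per-step inequality
  have hstep : ∀ t, η * (∑ s, g s * q t s) - η * (∑ s, g s * p s) ≤
      η^2 * M^2 / 2 + (dKL p (q t) - dKL p (q (t+1))) := by
    intro t
    have hyp := hpos t
    have hxp := hpos (t+1)
    have hFO := first_order hw g η hyp hxp (hqB (t+1)) hpB (hmin t)
    have hTP := three_point hpB.1 hxp hyp
    have hSB := step_bound g M hg hM η hη.le (q (t+1)) (q t) (fun s => (hxp s).le) hyp
      (hqB (t+1)).2.1 (hqB t).2.1
    linarith
  -- sum over t
  have hsum : ∑ t ∈ Finset.range T, (η * (∑ s, g s * q t s) - η * (∑ s, g s * p s)) ≤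
      T * (η^2 * M^2 / 2) + (dKL p (q 0) - dKL p (q T)) := by
    calc ∑ t ∈ Finset.range T, (η * (∑ s, g s * q t s) - η * (∑ s, g s * p s))
        ≤ ∑ t ∈ Finset.range T, (η^2 * M^2 / 2 + (dKL p (q t) - dKL p (q (t+1)))) :=
          Finset.sum_le_sum (fun t _ => hstep t)
      _ = T * (η^2 * M^2 / 2) + (dKL p (q 0) - dKL p (q T)) := by
          rw [Finset.sum_add_distrib, Finset.sum_const, Finset.card_range, nsmul_eq_mul,
            Finset.sum_range_sub' (fun t => dKL p (q t)) T]
  have hK0 : dKL p (q 0) ≤ C := by rw [hq0]; exact hpB.2.2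
  have hKT : 0 ≤ dKL p (q T) :=
    dKL_nonneg hpB.1 (hpos T) hpB.2.1 (hqB T).2.1
  have hmain : η * ∑ t ∈ Finset.range T, ((∑ s, g s * q t s) - ∑ s, g s * p s) ≤
      C + T * (η^2 * M^2 / 2) := by
    have : η * ∑ t ∈ Finset.range T, ((∑ s, g s * q t s) - ∑ s, g s * p s)
        = ∑ t ∈ Finset.range T, (η * (∑ s, g s * q t s) - η * (∑ s, g s * p s)) := by
      rw [Finset.mul_sum]
      exact Finset.sum_congr rfl (fun t _ => by ring)
    rw [this]
    linarith
  have hTpos : (0:ℝ) < T := by exact_mod_cast Nat.lt_of_lt_of_le Nat.zero_lt_one hT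
  rw [one_div, inv_mul_le_iff₀ hTpos]
  have hRHS : (T:ℝ) * (C / (η * T) + η * M ^ 2 / 2) = C / η + T * (η * M^2/2) := by
    field_simp
  rw [hRHS]
  rw [← mul_le_mul_iff_right₀ hη]
  have hCη : η * (C / η + T * (η * M^2/2)) = C + T * (η^2*M^2/2) := by
    field_simp
  rw [hCη]
  exact hmain
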